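/- Let C be an r-identifying code in a graph G and D a non-empty subset of C. Fix c ∈ D and let I_1, …, I_k be the distinct sets among {I_r(D;u) : u ∈ B_r(c)}, with i_j the number of vertices u ∈ B_r(c) satisfying I_r(D;u) = I_j. Then s_r(C;c) ≤ Σ_{j=1}^{k} ( 1/|I_j| + (i_j − 1)/(|I_j|+1) ). -/

import Mathlib

open Classical in
lemma sum_bound {V : Type*} (T : Finset V) (f : V → ℝ) (n : ℕ) (hn : 1 ≤ n)
    (h1 : ∀ u ∈ T, f u ≤ 1 / (n : ℝ))
    (h2 : ∀ u ∈ T, ∀ v ∈ T, ¬ f u ≤ 1 / ((n : ℝ) + 1) → ¬ f v ≤ 1 / ((n : ℝ) + 1) → u = v) :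
    ∑ u ∈ T, f u ≤ 1 / (n : ℝ) + ((T.card : ℝ) - 1) / ((n : ℝ) + 1) := by
  have hn0 : (0 : ℝ) < n := by exact_mod_cast hn
  have hn1 : (0 : ℝ) < (n : ℝ) + 1 := by linarith
  have hle : 1 / ((n : ℝ) + 1) ≤ 1 / (n : ℝ) := by
    apply one_div_le_one_div_of_le hn0; linarith
  by_cases hall : ∀ u ∈ T, f u ≤ 1 / ((n : ℝ) + 1)
  · have := Finset.sum_le_card_nsmul T f _ hall
    rw [nsmul_eq_mul] at this
    have : ∑ u ∈ T, f u ≤ (T.card : ℝ) * (1 / ((n:ℝ)+1)) := this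
    calc ∑ u ∈ T, f u ≤ (T.card : ℝ) * (1 / ((n:ℝ)+1)) := this
      _ = 1/((n:ℝ)+1) + ((T.card : ℝ) - 1) / ((n:ℝ)+1) := by field_simp; ring
      _ ≤ 1/(n:ℝ) + ((T.card : ℝ) - 1) / ((n:ℝ)+1) := by linarith
  · push_neg at hall
    obtain ⟨u0, hu0, hu0b⟩ := hall
    have hsplit := Finset.add_sum_erase T f hu0
    have hrest : ∀ u ∈ T.erase u0, f u ≤ 1 / ((n:ℝ)+1) := by
      intro u hu
      by_contra hub
      exact (Finset.ne_of_mem_erase hu) (h2 u (Finset.mem_of_mem_erase hu) u0 hu0 hub (not_le.2 hu0b))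
    have hsum2 := Finset.sum_le_card_nsmul _ f _ hrest
    rw [nsmul_eq_mul] at hsum2
    have hcard : ((T.erase u0).card : ℝ) = (T.card : ℝ) - 1 := by
      rw [Finset.card_erase_of_mem hu0]
      have : 1 ≤ T.card := Finset.card_pos.2 ⟨u0, hu0⟩
      push_cast [this]; ring
    rw [hcard] at hsum2
    have h1u0 := h1 u0 hu0
    calc ∑ u ∈ T, f u = f u0 + ∑ u ∈ T.erase u0, f u := hsplit.symm
      _ ≤ 1/(n:ℝ) + ((T.card : ℝ) - 1) * (1/((n:ℝ)+1)) := by linarith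
      _ = 1/(n:ℝ) + ((T.card : ℝ) - 1) / ((n:ℝ)+1) := by ring

def gball {V : Type*} (G : SimpleGraph V) (r : ℕ) (u : V) : Set V := {x | G.dist u x ≤ r}

def gIdent {V : Type*} (G : SimpleGraph V) (r : ℕ) (C : Set V) : Prop :=
  ∀ u : V, (gball G r u ∩ C).Nonempty ∧ ∀ v : V, u ≠ v → gball G r u ∩ C ≠ gball G r v ∩ C

noncomputable def gshare {V : Type*} (G : SimpleGraph V) (r : ℕ) (D : Set V) (c : V) : ℝ :=
  ∑' u : (gball G r c), 1 / ((gball G r ↑u ∩ D).ncard : ℝ)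

theorem stmt3 {V : Type*} (G : SimpleGraph V) (hG : G.Connected) (r : ℕ) (hr : 0 < r)
    (hfin : ∀ u : V, (gball G r u).Finite) (C D : Set V) (hC : gIdent G r C) (hD : D ⊆ C)
    (hDne : D.Nonempty) (c : V) (hc : c ∈ D) (k : ℕ) (hk : 0 < k) (I : Fin k → Set V)
    (i : Fin k → ℕ) (hinj : Function.Injective I)
    (hcover : ∀ u ∈ gball G r c, ∃ j : Fin k, gball G r u ∩ D = I j)
    (harise : ∀ j : Fin k, ∃ u ∈ gball G r c, gball G r u ∩ D = I j)
    (hcount : ∀ j : Fin k, i j = {u ∈ gball G r c | gball G r u ∩ D = I j}.ncard) :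
    gshare G r C c ≤
      ∑ j : Fin k, (1 / ((I j).ncard : ℝ) + ((i j : ℝ) - 1) / (((I j).ncard : ℝ) + 1)) := by
  classical
  set f : V → ℝ := fun u => 1 / ((gball G r u ∩ C).ncard : ℝ) with hf
  have hSfin := hfin c
  haveI : Fintype (gball G r c) := hSfin.fintype
  set Sfin : Finset V := hSfin.toFinset with hSdef
  -- step 1: gshare as finite sum
  have hstep1 : gshare G r C c = ∑ u ∈ Sfin, f u := by
    rw [gshare, tsum_fintype]
    exact (Finset.sum_subtype Sfin (fun x => by
      simp [hSdef, Set.Finite.mem_toFinset]) f).symm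
  -- classifier
  have hinh : Nonempty (Fin k) := ⟨⟨0, hk⟩⟩
  set g : V → Fin k := fun u =>
    if h : ∃ j : Fin k, gball G r u ∩ D = I j then h.choose else hinh.some with hg
  have hgspec : ∀ u ∈ gball G r c, gball G r u ∩ D = I (g u) := by
    intro u hu
    have h : ∃ j : Fin k, gball G r u ∩ D = I j := hcover u hu
    simp only [hg, dif_pos h]
    exact h.choose_spec
  have hgiff : ∀ u ∈ gball G r c, ∀ j : Fin k, (g u = j ↔ gball G r u ∩ D = I j) := by
    intro u hu j
    constructor
    · rintro rfl; exact hgspec u hu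
    · intro h; exact hinj ((hgspec u hu).symm.trans h)
  -- step 2: fiberwise
  have hstep2 : ∑ u ∈ Sfin, f u = ∑ j : Fin k, ∑ u ∈ Sfin.filter (fun u => g u = j), f u :=
    (Finset.sum_fiberwise_of_maps_to (fun x _ => Finset.mem_univ (g x)) f).symm
  rw [hstep1, hstep2]
  apply Finset.sum_le_sum
  intro j _
  set T : Finset V := Sfin.filter (fun u => g u = j) with hT
  have hmemT : ∀ u, u ∈ T ↔ (u ∈ gball G r c ∧ gball G r u ∩ D = I j) := by
    intro u
    simp only [hT, Finset.mem_filter, hSdef, Set.Finite.mem_toFinset]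
    constructor
    · rintro ⟨h1, h2⟩; exact ⟨h1, (hgiff u h1 j).1 h2⟩
    · rintro ⟨h1, h2⟩; exact ⟨h1, (hgiff u h1 j).2 h2⟩
  -- I j is finite and nonempty
  obtain ⟨u0, hu0, hu0e⟩ := harise j
  have hIfin : (I j).Finite := hu0e ▸ (hfin u0).inter_of_left D
  have hIne : (I j).Nonempty := by
    refine ⟨c, ?_⟩
    rw [← hu0e]
    exact ⟨by simpa [gball, G.dist_comm] using hu0, hc⟩
  set n : ℕ := (I j).ncard with hn
  have hn1 : 1 ≤ n := by
    rw [hn]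
    exact (Set.ncard_pos hIfin).2 hIne
  -- card of T is i j
  have hTcard : T.card = i j := by
    rw [hcount j]
    have : {u ∈ gball G r c | gball G r u ∩ D = I j} = (↑T : Set V) := by
      ext u; simp [hmemT u, Set.mem_setOf_eq]
    rw [this, Set.ncard_coe_finset]
  -- facts about members of T
  have hsub : ∀ u ∈ T, I j ⊆ gball G r u ∩ C := by
    intro u hu
    rw [← ((hmemT u).1 hu).2]
    exact Set.inter_subset_inter_right _ hD
  have hCfin : ∀ u : V, (gball G r u ∩ C).Finite := fun u => (hfin u).inter_of_left C
  have hge : ∀ u ∈ T, n ≤ (gball G r u ∩ C).ncard := by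
    intro u hu
    exact Set.ncard_le_ncard (hsub u hu) (hCfin u)
  have h1 : ∀ u ∈ T, f u ≤ 1 / (n : ℝ) := by
    intro u hu
    apply one_div_le_one_div_of_le (by exact_mod_cast hn1)
    exact_mod_cast hge u hu
  have h2 : ∀ u ∈ T, ∀ v ∈ T, ¬ f u ≤ 1 / ((n : ℝ) + 1) → ¬ f v ≤ 1 / ((n : ℝ) + 1) → u = v := by
    have key : ∀ u ∈ T, ¬ f u ≤ 1 / ((n : ℝ) + 1) → gball G r u ∩ C = I j := by
      intro u hu hub
      have hm := hge u hu
      have hmle : (gball G r u ∩ C).ncard ≤ n := by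
        by_contra hlt
        push_neg at hlt
        apply hub
        apply one_div_le_one_div_of_le (by positivity)
        have : (n : ℝ) + 1 ≤ ((gball G r u ∩ C).ncard : ℝ) := by exact_mod_cast hlt
        linarith
      exact (Set.eq_of_subset_of_ncard_le (hsub u hu) hmle (hCfin u)).symm
    intro u hu v hv hub hvb
    by_contra hne
    exact (hC u).2 v hne ((key u hu hub).trans (key v hv hvb).symm)
  have := sum_bound T f n hn1 h1 h2
  rw [hTcard] at this
  exact this
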